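/- Let 0 < l < 1, φ(ξ) = l·ξ·|ξ| − ξ³, ρ > 1/2 and s > 3ρ. Then there exists a constant c > 0 such that for every continuous compactly supported f : ℝ² → ℂ, the function F(x,t) := ∬_{ℝ²} e^{i(xξ + tτ)} (1+|ξ|)^{−s} (1+|τ−φ(ξ)|)^{−ρ} f(ξ,τ) dξ dτ satisfies ( ∫_ℝ ( sup_{t ∈ ℝ} |F(x,t)| )² dx )^{1/2} ≤ c ( ∬_{ℝ²} |f(ξ,τ)|² dξ dτ )^{1/2}. -/

import Mathlib

open MeasureTheory ENNReal Complex

/-- The phase function of the generalized Benjamin equation: φ(ξ) = l·ξ·|ξ| − ξ³. -/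
noncomputable def benjaminPhase (l : ℝ) (ξ : ℝ) : ℝ := l * ξ * |ξ| - ξ ^ 3

/-- A^s F_ρ written as an absolutely convergent Fourier integral:
    (A^s F_ρ)(x,t) = ∬ e^{i(xξ+tτ)} (1+|ξ|)^s (1+|τ−φ(ξ)|)^{−ρ} f(ξ,τ) dξ dτ. -/
noncomputable def symbolFourierInt (l ρ s : ℝ) (f : ℝ × ℝ → ℂ) (x t : ℝ) : ℂ :=
  ∫ p : ℝ × ℝ, Complex.exp (Complex.I * ((x * p.1 + t * p.2 : ℝ) : ℂ)) *
    (((1 + |p.1|) ^ s : ℝ) : ℂ) *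
    (((1 + |p.2 - benjaminPhase l p.1|) ^ (-ρ) : ℝ) : ℂ) * f p


-- measurability of parametric integral
lemma param_meas {K : (ℝ × ℝ) × ℝ → ℂ} (hK : Continuous K) :
    StronglyMeasurable (fun q : ℝ × ℝ => ∫ ξ : ℝ, K (q, ξ)) :=
  hK.stronglyMeasurable.integral_prod_right'

-- finiteness of the weight integral
lemma weight_finite {q : ℝ} (hq : 1 < q) :
    ∫⁻ τ : ℝ, ENNReal.ofReal ((1 + |τ|) ^ (-q)) < ⊤ := by
  have hint : Integrable (fun τ : ℝ => (1 + ‖τ‖) ^ (-q)) := by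
    apply integrable_one_add_norm (E := ℝ)
    simpa using hq
  have h0 : 0 ≤ᵐ[volume] fun τ : ℝ => (1 + ‖τ‖) ^ (-q) := by
    filter_upwards with τ
    positivity
  rw [show (fun τ : ℝ => ENNReal.ofReal ((1 + |τ|) ^ (-q)))
      = fun τ : ℝ => ENNReal.ofReal ((1 + ‖τ‖) ^ (-q)) by simp [Real.norm_eq_abs]]
  rw [← ofReal_integral_eq_lintegral_ofReal hint h0]
  exact ofReal_lt_top


lemma weight_bound {l ρ s ρ' : ℝ} (hl0 : 0 < l) (hl1 : l < 1) (hρ'0 : 0 ≤ ρ')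
    (h1 : ρ' ≤ ρ) (h2 : 3 * ρ' ≤ s) (ξ τ : ℝ) :
    (1 + |τ|) ^ ρ' * ((1 + |ξ|) ^ (-s) * (1 + |τ - benjaminPhase l ξ|) ^ (-ρ)) ≤ 1 := by
  set a : ℝ := 1 + |ξ| with ha
  set b : ℝ := 1 + |τ - benjaminPhase l ξ| with hb
  have ha1 : 1 ≤ a := by simp [ha, abs_nonneg]
  have hb1 : 1 ≤ b := by simp [hb, abs_nonneg]
  have ha0 : 0 < a := lt_of_lt_of_le one_pos ha1
  have hb0 : 0 < b := lt_of_lt_of_le one_pos hb1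
  have hφ : |benjaminPhase l ξ| ≤ ξ ^ 2 + |ξ| ^ 3 := by
    have h1' : |l * ξ * (|ξ|)| ≤ ξ ^ 2 := by
      rw [_root_.abs_mul, _root_.abs_mul, _root_.abs_abs, _root_.abs_of_pos hl0]
      have : |ξ| * |ξ| = ξ ^ 2 := by rw [← _root_.abs_mul, ← sq, _root_.abs_sq]
      nlinarith [abs_nonneg ξ, sq_nonneg ξ]
    have h2' : |ξ ^ 3| = |ξ| ^ 3 := by rw [_root_.abs_pow]
    calc |benjaminPhase l ξ| ≤ |l * ξ * (|ξ|)| + |ξ ^ 3| := abs_sub _ _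
      _ ≤ ξ ^ 2 + |ξ| ^ 3 := by rw [h2']; linarith
  have hkey : 1 + |τ| ≤ b * a ^ (3 : ℕ) := by
    have h3 : |τ| ≤ |τ - benjaminPhase l ξ| + |benjaminPhase l ξ| := by
      have := abs_sub_abs_le_abs_sub τ (benjaminPhase l ξ)
      have := abs_add_le (τ - benjaminPhase l ξ) (benjaminPhase l ξ)
      simpa using this
    have h4 : ξ ^ 2 = |ξ| ^ 2 := (_root_.sq_abs ξ).symm
    have h5 : (0:ℝ) ≤ |ξ| := abs_nonneg ξ
    have h6 : (0:ℝ) ≤ |τ - benjaminPhase l ξ| := abs_nonneg _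
    simp only [ha, hb]
    nlinarith [hφ, sq_nonneg (1 + |ξ|), pow_nonneg h5 3]
  have step1 : (1 + |τ|) ^ ρ' ≤ b ^ ρ' * a ^ (3 * ρ') := by
    have : (1 + |τ|) ^ ρ' ≤ (b * a ^ (3 : ℕ)) ^ ρ' :=
      Real.rpow_le_rpow (by positivity) hkey hρ'0
    calc (1 + |τ|) ^ ρ' ≤ (b * a ^ (3 : ℕ)) ^ ρ' := this
      _ = b ^ ρ' * (a ^ (3:ℕ)) ^ ρ' := Real.mul_rpow hb0.le (by positivity)
      _ = b ^ ρ' * a ^ (3 * ρ') := by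
          rw [← Real.rpow_natCast a 3, ← Real.rpow_mul ha0.le]
          norm_num
  calc (1 + |τ|) ^ ρ' * (a ^ (-s) * b ^ (-ρ))
      ≤ (b ^ ρ' * a ^ (3 * ρ')) * (a ^ (-s) * b ^ (-ρ)) := by
        apply mul_le_mul_of_nonneg_right step1 (by positivity)
    _ = (a ^ (3 * ρ') * a ^ (-s)) * (b ^ ρ' * b ^ (-ρ)) := by ring
    _ = a ^ (3 * ρ' + -s) * b ^ (ρ' + -ρ) := by
        rw [← Real.rpow_add ha0, ← Real.rpow_add hb0]
    _ ≤ 1 * 1 := by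
        apply mul_le_mul _ _ (by positivity) zero_le_one
        · exact Real.rpow_le_one_of_one_le_of_nonpos ha1 (by linarith)
        · exact Real.rpow_le_one_of_one_le_of_nonpos hb1 (by linarith)
    _ = 1 := mul_one 1

lemma param_meas1 {K : ℝ × ℝ → ℂ} (hK : Continuous K) :
    StronglyMeasurable (fun x : ℝ => ∫ ξ : ℝ, K (x, ξ)) :=
  hK.stronglyMeasurable.integral_prod_right'

set_option maxHeartbeats 1000000 in
lemma gauss_key {h : ℝ → ℂ} (hc : Continuous h) (hsupp : HasCompactSupport h)
    {ε : ℝ} (hε : 0 < ε) :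
    ∫⁻ x : ℝ, ENNReal.ofReal (Real.exp (-(ε * x ^ 2))) *
        (‖∫ ξ : ℝ, Complex.exp (Complex.I * ((x * ξ : ℝ) : ℂ)) * h ξ‖₊ : ℝ≥0∞) ^ 2
      ≤ ENNReal.ofReal (4 * Real.pi) * ∫⁻ ξ : ℝ, (‖h ξ‖₊ : ℝ≥0∞) ^ 2 := by
  have hint : Integrable h := hc.integrable_of_hasCompactSupport hsupp
  set G : ℝ → ℂ := fun x => ∫ ξ : ℝ, Complex.exp (Complex.I * ((x * ξ : ℝ) : ℂ)) * h ξ with hG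
  -- measurability of G
  have hGmeas : StronglyMeasurable G := by
    rw [hG]
    exact param_meas1 (K := fun q : ℝ × ℝ => Complex.exp (Complex.I * ((q.1 * q.2 : ℝ) : ℂ)) * h q.2) (by fun_prop)
  -- bound on G
  set M : ℝ := ∫ ξ : ℝ, ‖h ξ‖ with hM
  have hGbd : ∀ x, ‖G x‖ ≤ M := by
    intro x
    refine (norm_integral_le_integral_norm _).trans ?_
    apply le_of_eq
    congr 1
    ext ξ
    simp [Complex.norm_exp]
  -- the real integrand
  set ct : ℝ → ℝ := fun x => Real.exp (-(ε * x ^ 2)) * ‖G x‖ ^ 2 with hct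
  have hctnn : ∀ x, 0 ≤ ct x := fun x => by positivity
  have hctint : Integrable ct := by
    apply Integrable.mono' ((integrable_exp_neg_mul_sq hε).const_mul (M ^ 2))
    · exact ((Real.continuous_exp.comp (by fun_prop)).stronglyMeasurable.mul
        ((hGmeas.norm).pow 2)).aestronglyMeasurable
    · filter_upwards with x
      have h1 : 0 ≤ Real.exp (-(ε * x ^ 2)) := Real.exp_nonneg _
      have h2 : ‖G x‖ ^ 2 ≤ M ^ 2 := by
        have := hGbd x
        nlinarith [norm_nonneg (G x)]
      rw [Real.norm_eq_abs, _root_.abs_of_nonneg (hctnn x), hct]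
      calc Real.exp (-(ε * x ^ 2)) * ‖G x‖ ^ 2 ≤ Real.exp (-(ε * x ^ 2)) * M ^ 2 := by
            exact mul_le_mul_of_nonneg_left h2 h1
        _ = M ^ 2 * Real.exp (-ε * x ^ 2) := by rw [neg_mul]; ring
  -- the complex integrand
  set c : ℝ → ℂ := fun x => ((Real.exp (-(ε * x ^ 2)) : ℝ) : ℂ) * (G x * (starRingEnd ℂ) (G x))
    with hcdef
  have hcct : ∀ x, c x = ((ct x : ℝ) : ℂ) := by
    intro x
    rw [hcdef, hct]
    simp only [Complex.mul_conj]
    push_cast [Complex.normSq_eq_norm_sq]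
    ring
  set T : ℝ := ∫ x : ℝ, ct x with hT
  have hTnn : 0 ≤ T := integral_nonneg hctnn
  have hcint : (∫ x : ℝ, c x) = ((T : ℝ) : ℂ) := by
    rw [hT]
    simp_rw [hcct]
    exact integral_ofReal
  have hTnorm : T = ‖∫ x : ℝ, c x‖ := by
    rw [hcint]
    simp [_root_.abs_of_nonneg hTnn]
  -- express c as a double integral
  set Ψ : ℝ → ℝ × ℝ → ℂ := fun x p =>
    ((Real.exp (-(ε * x ^ 2)) : ℝ) : ℂ) *
      ((Complex.exp (Complex.I * ((x * p.1 : ℝ) : ℂ)) * h p.1) *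
        (Complex.exp (-(Complex.I * ((x * p.2 : ℝ) : ℂ))) * (starRingEnd ℂ) (h p.2))) with hΨ
  have hGconj : ∀ x, (starRingEnd ℂ) (G x)
      = ∫ η : ℝ, Complex.exp (-(Complex.I * ((x * η : ℝ) : ℂ))) * (starRingEnd ℂ) (h η) := by
    intro x
    rw [hG, ← integral_conj]
    congr 1
    funext η
    rw [map_mul, ← Complex.exp_conj]
    congr 2
    simp [Complex.conj_I]
  have hprod : ∀ x, c x = ∫ p : ℝ × ℝ, Ψ x p := by
    intro x
    have : (∫ p : ℝ × ℝ, Ψ x p) = c x := by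
      simp only [hΨ, hcdef]
      rw [Measure.volume_eq_prod ℝ ℝ, integral_const_mul,
        integral_prod_mul (fun ξ : ℝ => Complex.exp (Complex.I * ((x * ξ : ℝ) : ℂ)) * h ξ)
          (fun η : ℝ => Complex.exp (-(Complex.I * ((x * η : ℝ) : ℂ))) * (starRingEnd ℂ) (h η)),
        hGconj x, hG]
    exact this.symm
  -- integrability of Ψ on the product space
  have hΨint : Integrable (Function.uncurry Ψ) ((volume : Measure ℝ).prod (volume : Measure (ℝ × ℝ))) := by
    have hD : Integrable (fun z : ℝ × (ℝ × ℝ) => Real.exp (-ε * z.1 ^ 2) * (‖h z.2.1‖ * ‖h z.2.2‖))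
        ((volume : Measure ℝ).prod (volume : Measure (ℝ × ℝ))) := by
      have hg : Integrable (fun p : ℝ × ℝ => ‖h p.1‖ * ‖h p.2‖) (volume : Measure (ℝ × ℝ)) := by
        rw [Measure.volume_eq_prod ℝ ℝ]
        exact hint.norm.mul_prod hint.norm
      exact Integrable.mul_prod (g := fun p : ℝ × ℝ => ‖h p.1‖ * ‖h p.2‖)
        (integrable_exp_neg_mul_sq hε) hg
    apply hD.mono'
    · apply Continuous.aestronglyMeasurable
      show Continuous fun z : ℝ × (ℝ × ℝ) => Ψ z.1 z.2
      simp only [hΨ]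
      have hconj : Continuous fun y : ℝ => (starRingEnd ℂ) (h y) := continuous_star.comp hc
      have h1 : Continuous fun z : ℝ × (ℝ × ℝ) => ((Real.exp (-(ε * z.1 ^ 2)) : ℝ) : ℂ) := by
        fun_prop
      have h2 : Continuous fun z : ℝ × (ℝ × ℝ) =>
          Complex.exp (Complex.I * ((z.1 * z.2.1 : ℝ) : ℂ)) := by fun_prop
      have h3 : Continuous fun z : ℝ × (ℝ × ℝ) => h z.2.1 :=
        hc.comp (continuous_fst.comp continuous_snd)
      have h4 : Continuous fun z : ℝ × (ℝ × ℝ) =>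
          Complex.exp (-(Complex.I * ((z.1 * z.2.2 : ℝ) : ℂ))) := by fun_prop
      have h5 : Continuous fun z : ℝ × (ℝ × ℝ) => (starRingEnd ℂ) (h z.2.2) :=
        hconj.comp (continuous_snd.comp continuous_snd)
      exact h1.mul ((h2.mul h3).mul (h4.mul h5))
    · filter_upwards with z
      simp only [hΨ, Function.uncurry]
      rw [norm_mul, norm_mul, norm_mul, norm_mul]
      simp only [Complex.norm_exp, Complex.norm_real, Real.norm_eq_abs, RCLike.norm_conj]
      have e1 : (Complex.I * ((z.1 * z.2.1 : ℝ) : ℂ)).re = 0 := by simp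
      have e2 : (-(Complex.I * ((z.1 * z.2.2 : ℝ) : ℂ))).re = 0 := by simp
      rw [e1, e2, Real.exp_zero, _root_.abs_of_nonneg (Real.exp_nonneg _)]
      simp only [one_mul]
      rw [neg_mul ε]
  -- swap the order of integration
  have hswap : (∫ x : ℝ, c x) = ∫ p : ℝ × ℝ, ∫ x : ℝ, Ψ x p := by
    rw [show (∫ x : ℝ, c x) = ∫ x : ℝ, ∫ p : ℝ × ℝ, Ψ x p from by simp_rw [hprod]]
    exact integral_integral_swap hΨint
  -- evaluate the inner Gaussian integral
  have hinner : ∀ p : ℝ × ℝ, (∫ x : ℝ, Ψ x p)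
      = (h p.1 * (starRingEnd ℂ) (h p.2)) *
        (((Real.pi : ℂ) / (ε : ℂ)) ^ (1 / 2 : ℂ) *
          Complex.exp (-(((p.1 - p.2 : ℝ) : ℂ)) ^ 2 / (4 * (ε : ℂ)))) := by
    intro p
    have hpt : ∀ x : ℝ, Ψ x p = (h p.1 * (starRingEnd ℂ) (h p.2)) *
        (Complex.exp (Complex.I * (((p.1 - p.2 : ℝ)) : ℂ) * (x : ℂ)) *
          Complex.exp (-(ε : ℂ) * (x : ℂ) ^ 2)) := by
      intro x
      simp only [hΨ]
      rw [Complex.ofReal_exp]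
      rw [show Complex.exp (Complex.I * (((p.1 - p.2 : ℝ)) : ℂ) * (x : ℂ)) *
            Complex.exp (-(ε : ℂ) * (x : ℂ) ^ 2)
          = Complex.exp (Complex.I * ((x * p.1 : ℝ) : ℂ)) *
            (Complex.exp (-(Complex.I * ((x * p.2 : ℝ) : ℂ))) *
              Complex.exp (((-(ε * x ^ 2) : ℝ) : ℂ))) from by
        rw [← Complex.exp_add, ← Complex.exp_add, ← Complex.exp_add]
        congr 1
        push_cast
        ring]
      ring
    simp_rw [hpt]
    rw [integral_const_mul]
    congr 1
    exact fourierIntegral_gaussian (by simpa using hε) _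
  -- the Gaussian weight
  set W : ℝ → ℝ := fun u => (Real.pi / ε) ^ ((1 : ℝ) / 2) * Real.exp (-(u ^ 2 / (4 * ε))) with hW
  have hWnn : ∀ u, 0 ≤ W u := fun u => by rw [hW]; positivity
  have hWcont : Continuous W := by rw [hW]; fun_prop
  have hWeq : W = fun u => (Real.pi / ε) ^ ((1 : ℝ) / 2) * Real.exp (-(1 / (4 * ε)) * u ^ 2) := by
    funext u
    simp only [hW]
    rw [show -(u ^ 2 / (4 * ε)) = -(1 / (4 * ε)) * u ^ 2 by ring]
  have hWint : Integrable W := by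
    rw [hWeq]
    exact (integrable_exp_neg_mul_sq (by positivity)).const_mul _
  have hWval : ∫ u : ℝ, W u = 2 * Real.pi := by
    rw [hWeq, integral_const_mul, integral_gaussian, ← Real.sqrt_eq_rpow,
      ← Real.sqrt_mul (by positivity)]
    rw [show Real.pi / ε * (Real.pi / (1 / (4 * ε))) = (2 * Real.pi) ^ 2 by
      field_simp; ring]
    exact Real.sqrt_sq (by positivity)
  -- pointwise norm of the integrand after Fubini
  have hnormval : ∀ p : ℝ × ℝ,
      ‖(h p.1 * (starRingEnd ℂ) (h p.2)) *
        (((Real.pi : ℂ) / (ε : ℂ)) ^ (1 / 2 : ℂ) *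
          Complex.exp (-(((p.1 - p.2 : ℝ) : ℂ)) ^ 2 / (4 * (ε : ℂ))))‖
      = ‖h p.1‖ * ‖h p.2‖ * W (p.1 - p.2) := by
    intro p
    rw [norm_mul, norm_mul, norm_mul, RCLike.norm_conj]
    have e1 : ‖((Real.pi : ℂ) / (ε : ℂ)) ^ (1 / 2 : ℂ)‖ = (Real.pi / ε) ^ ((1 : ℝ) / 2) := by
      rw [show ((Real.pi : ℂ) / (ε : ℂ)) = (((Real.pi / ε : ℝ)) : ℂ) by push_cast; ring,
        show (1 / 2 : ℂ) = (((1 / 2 : ℝ)) : ℂ) by norm_num,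
        ← Complex.ofReal_cpow (by positivity), Complex.norm_real]
      exact Real.norm_of_nonneg (by positivity)
    have e2 : ‖Complex.exp (-(((p.1 - p.2 : ℝ) : ℂ)) ^ 2 / (4 * (ε : ℂ)))‖
        = Real.exp (-((p.1 - p.2) ^ 2 / (4 * ε))) := by
      rw [Complex.norm_exp]
      congr 1
      rw [show -(((p.1 - p.2 : ℝ) : ℂ)) ^ 2 / (4 * (ε : ℂ))
          = (((-((p.1 - p.2) ^ 2 / (4 * ε)) : ℝ)) : ℂ) by push_cast; ring]
      exact Complex.ofReal_re _
    rw [e1, e2]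
  -- bound ofReal T by the double lintegral
  have hTbound : ENNReal.ofReal T
      ≤ ∫⁻ p : ℝ × ℝ, ENNReal.ofReal (‖h p.1‖ * ‖h p.2‖ * W (p.1 - p.2)) := by
    have hre : (∫ p : ℝ × ℝ, ∫ x : ℝ, Ψ x p)
        = ∫ p : ℝ × ℝ, (h p.1 * (starRingEnd ℂ) (h p.2)) *
            (((Real.pi : ℂ) / (ε : ℂ)) ^ (1 / 2 : ℂ) *
              Complex.exp (-(((p.1 - p.2 : ℝ) : ℂ)) ^ 2 / (4 * (ε : ℂ)))) := by
      apply integral_congr_ae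
      filter_upwards with p
      exact hinner p
    calc ENNReal.ofReal T = ENNReal.ofReal ‖∫ p : ℝ × ℝ, (h p.1 * (starRingEnd ℂ) (h p.2)) *
            (((Real.pi : ℂ) / (ε : ℂ)) ^ (1 / 2 : ℂ) *
              Complex.exp (-(((p.1 - p.2 : ℝ) : ℂ)) ^ 2 / (4 * (ε : ℂ))))‖ := by
          rw [hTnorm, hswap, hre]
      _ ≤ ENNReal.ofReal ((∫⁻ p : ℝ × ℝ, ENNReal.ofReal ‖(h p.1 * (starRingEnd ℂ) (h p.2)) *
            (((Real.pi : ℂ) / (ε : ℂ)) ^ (1 / 2 : ℂ) *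
              Complex.exp (-(((p.1 - p.2 : ℝ) : ℂ)) ^ 2 / (4 * (ε : ℂ))))‖).toReal) :=
          ENNReal.ofReal_le_ofReal (norm_integral_le_lintegral_norm _)
      _ ≤ ∫⁻ p : ℝ × ℝ, ENNReal.ofReal ‖(h p.1 * (starRingEnd ℂ) (h p.2)) *
            (((Real.pi : ℂ) / (ε : ℂ)) ^ (1 / 2 : ℂ) *
              Complex.exp (-(((p.1 - p.2 : ℝ) : ℂ)) ^ 2 / (4 * (ε : ℂ))))‖ :=
          ENNReal.ofReal_toReal_le
      _ = ∫⁻ p : ℝ × ℝ, ENNReal.ofReal (‖h p.1‖ * ‖h p.2‖ * W (p.1 - p.2)) := by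
          apply lintegral_congr
          intro p
          rw [hnormval p]
  -- measurability helpers
  have hWm : Measurable fun p : ℝ × ℝ => ENNReal.ofReal (W (p.1 - p.2)) :=
    ENNReal.measurable_ofReal.comp (hWcont.measurable.comp (measurable_fst.sub measurable_snd))
  have hA1 : Measurable fun p : ℝ × ℝ => (‖h p.1‖₊ : ℝ≥0∞) ^ 2 :=
    ((hc.measurable.comp measurable_fst).nnnorm.coe_nnreal_ennreal).pow_const 2
  have hA2 : Measurable fun p : ℝ × ℝ => (‖h p.2‖₊ : ℝ≥0∞) ^ 2 :=
    ((hc.measurable.comp measurable_snd).nnnorm.coe_nnreal_ennreal).pow_const 2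
  -- shift identities
  have hWshift1 : ∀ ξ : ℝ, (∫⁻ η : ℝ, ENNReal.ofReal (W (ξ - η))) = ENNReal.ofReal (2 * Real.pi) := by
    intro ξ
    calc (∫⁻ η : ℝ, ENNReal.ofReal (W (ξ - η)))
        = ∫⁻ η : ℝ, ENNReal.ofReal (W (η - ξ)) := by
          apply lintegral_congr
          intro η
          simp only [hW]
          rw [show (ξ - η) ^ 2 = (η - ξ) ^ 2 from by ring]
      _ = ENNReal.ofReal (∫ η : ℝ, W (η - ξ)) :=
          (ofReal_integral_eq_lintegral_ofReal (hWint.comp_sub_right ξ)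
            (Filter.Eventually.of_forall fun η => hWnn _)).symm
      _ = ENNReal.ofReal (2 * Real.pi) := by
          rw [integral_sub_right_eq_self W ξ, hWval]
  have hWshift2 : ∀ η : ℝ, (∫⁻ ξ : ℝ, ENNReal.ofReal (W (ξ - η))) = ENNReal.ofReal (2 * Real.pi) := by
    intro η
    calc (∫⁻ ξ : ℝ, ENNReal.ofReal (W (ξ - η)))
        = ENNReal.ofReal (∫ ξ : ℝ, W (ξ - η)) :=
          (ofReal_integral_eq_lintegral_ofReal (hWint.comp_sub_right η)
            (Filter.Eventually.of_forall fun ξ => hWnn _)).symm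
      _ = ENNReal.ofReal (2 * Real.pi) := by
          rw [integral_sub_right_eq_self W η, hWval]
  -- main chain
  have hchain : (∫⁻ p : ℝ × ℝ, ENNReal.ofReal (‖h p.1‖ * ‖h p.2‖ * W (p.1 - p.2)))
      ≤ ENNReal.ofReal (4 * Real.pi) * ∫⁻ ξ : ℝ, (‖h ξ‖₊ : ℝ≥0∞) ^ 2 := by
    have step1 : (∫⁻ p : ℝ × ℝ, ENNReal.ofReal (‖h p.1‖ * ‖h p.2‖ * W (p.1 - p.2)))
        ≤ ∫⁻ p : ℝ × ℝ, ((‖h p.1‖₊ : ℝ≥0∞) ^ 2 + (‖h p.2‖₊ : ℝ≥0∞) ^ 2) *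
            ENNReal.ofReal (W (p.1 - p.2)) := by
      apply lintegral_mono
      intro p
      dsimp only
      rw [ENNReal.ofReal_mul (by positivity)]
      apply mul_le_mul_left
      calc ENNReal.ofReal (‖h p.1‖ * ‖h p.2‖)
          ≤ ENNReal.ofReal (‖h p.1‖ ^ 2 + ‖h p.2‖ ^ 2) := by
            apply ENNReal.ofReal_le_ofReal
            nlinarith [norm_nonneg (h p.1), norm_nonneg (h p.2),
              sq_nonneg (‖h p.1‖ - ‖h p.2‖)]
        _ = (‖h p.1‖₊ : ℝ≥0∞) ^ 2 + (‖h p.2‖₊ : ℝ≥0∞) ^ 2 := by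
            rw [ENNReal.ofReal_add (by positivity) (by positivity),
              ENNReal.ofReal_pow (norm_nonneg _), ENNReal.ofReal_pow (norm_nonneg _),
              ofReal_norm, enorm_eq_nnnorm, ofReal_norm, enorm_eq_nnnorm]
    have step2 : (∫⁻ p : ℝ × ℝ, ((‖h p.1‖₊ : ℝ≥0∞) ^ 2 + (‖h p.2‖₊ : ℝ≥0∞) ^ 2) *
            ENNReal.ofReal (W (p.1 - p.2)))
        = (∫⁻ p : ℝ × ℝ, (‖h p.1‖₊ : ℝ≥0∞) ^ 2 * ENNReal.ofReal (W (p.1 - p.2)))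
          + ∫⁻ p : ℝ × ℝ, (‖h p.2‖₊ : ℝ≥0∞) ^ 2 * ENNReal.ofReal (W (p.1 - p.2)) := by
      rw [← lintegral_add_left (hA1.fun_mul hWm)]
      apply lintegral_congr
      intro p
      ring
    have term1 : (∫⁻ p : ℝ × ℝ, (‖h p.1‖₊ : ℝ≥0∞) ^ 2 * ENNReal.ofReal (W (p.1 - p.2)))
        = ENNReal.ofReal (2 * Real.pi) * ∫⁻ ξ : ℝ, (‖h ξ‖₊ : ℝ≥0∞) ^ 2 := by
      rw [Measure.volume_eq_prod ℝ ℝ, lintegral_prod _ (hA1.fun_mul hWm).aemeasurable]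
      calc (∫⁻ ξ : ℝ, ∫⁻ η : ℝ, (‖h ξ‖₊ : ℝ≥0∞) ^ 2 * ENNReal.ofReal (W (ξ - η)))
          = ∫⁻ ξ : ℝ, (‖h ξ‖₊ : ℝ≥0∞) ^ 2 * ENNReal.ofReal (2 * Real.pi) := by
            apply lintegral_congr
            intro ξ
            rw [lintegral_const_mul' _ _ (ENNReal.pow_ne_top ENNReal.coe_ne_top), hWshift1 ξ]
        _ = ENNReal.ofReal (2 * Real.pi) * ∫⁻ ξ : ℝ, (‖h ξ‖₊ : ℝ≥0∞) ^ 2 := by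
            rw [← lintegral_const_mul' _ _ ENNReal.ofReal_ne_top]
            apply lintegral_congr
            intro ξ
            ring
    have term2 : (∫⁻ p : ℝ × ℝ, (‖h p.2‖₊ : ℝ≥0∞) ^ 2 * ENNReal.ofReal (W (p.1 - p.2)))
        = ENNReal.ofReal (2 * Real.pi) * ∫⁻ ξ : ℝ, (‖h ξ‖₊ : ℝ≥0∞) ^ 2 := by
      rw [Measure.volume_eq_prod ℝ ℝ, lintegral_prod_symm _ (hA2.fun_mul hWm).aemeasurable]
      calc (∫⁻ η : ℝ, ∫⁻ ξ : ℝ, (‖h η‖₊ : ℝ≥0∞) ^ 2 * ENNReal.ofReal (W (ξ - η)))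
          = ∫⁻ η : ℝ, (‖h η‖₊ : ℝ≥0∞) ^ 2 * ENNReal.ofReal (2 * Real.pi) := by
            apply lintegral_congr
            intro η
            rw [lintegral_const_mul' _ _ (ENNReal.pow_ne_top ENNReal.coe_ne_top), hWshift2 η]
        _ = ENNReal.ofReal (2 * Real.pi) * ∫⁻ η : ℝ, (‖h η‖₊ : ℝ≥0∞) ^ 2 := by
            rw [← lintegral_const_mul' _ _ ENNReal.ofReal_ne_top]
            apply lintegral_congr
            intro η
            ring
    calc (∫⁻ p : ℝ × ℝ, ENNReal.ofReal (‖h p.1‖ * ‖h p.2‖ * W (p.1 - p.2)))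
        ≤ ∫⁻ p : ℝ × ℝ, ((‖h p.1‖₊ : ℝ≥0∞) ^ 2 + (‖h p.2‖₊ : ℝ≥0∞) ^ 2) *
            ENNReal.ofReal (W (p.1 - p.2)) := step1
      _ = ENNReal.ofReal (2 * Real.pi) * (∫⁻ ξ : ℝ, (‖h ξ‖₊ : ℝ≥0∞) ^ 2)
          + ENNReal.ofReal (2 * Real.pi) * ∫⁻ ξ : ℝ, (‖h ξ‖₊ : ℝ≥0∞) ^ 2 := by
          rw [step2, term1, term2]
      _ = ENNReal.ofReal (4 * Real.pi) * ∫⁻ ξ : ℝ, (‖h ξ‖₊ : ℝ≥0∞) ^ 2 := by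
          rw [← add_mul, ← ENNReal.ofReal_add (by positivity) (by positivity),
            show 2 * Real.pi + 2 * Real.pi = 4 * Real.pi from by ring]
  -- identify the LHS with ofReal T
  have hLHS : (∫⁻ x : ℝ, ENNReal.ofReal (Real.exp (-(ε * x ^ 2))) * (‖G x‖₊ : ℝ≥0∞) ^ 2)
      = ENNReal.ofReal T := by
    rw [hT, ofReal_integral_eq_lintegral_ofReal hctint (Filter.Eventually.of_forall hctnn)]
    apply lintegral_congr
    intro x
    rw [hct]
    rw [ENNReal.ofReal_mul (Real.exp_nonneg _)]
    congr 1
    rw [ENNReal.ofReal_pow (norm_nonneg _), ofReal_norm, enorm_eq_nnnorm]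
  rw [hLHS]
  exact hTbound.trans hchain

lemma plancherel_ineq {h : ℝ → ℂ} (hc : Continuous h) (hsupp : HasCompactSupport h) :
    ∫⁻ x : ℝ, (‖∫ ξ : ℝ, Complex.exp (Complex.I * ((x * ξ : ℝ) : ℂ)) * h ξ‖₊ : ℝ≥0∞) ^ 2
      ≤ ENNReal.ofReal (4 * Real.pi) * ∫⁻ ξ : ℝ, (‖h ξ‖₊ : ℝ≥0∞) ^ 2 := by
  set G : ℝ → ℂ := fun x => ∫ ξ : ℝ, Complex.exp (Complex.I * ((x * ξ : ℝ) : ℂ)) * h ξ with hG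
  have hGmeas : StronglyMeasurable G := by
    rw [hG]
    exact param_meas1
      (K := fun q : ℝ × ℝ => Complex.exp (Complex.I * ((q.1 * q.2 : ℝ) : ℂ)) * h q.2)
      (by fun_prop)
  set F : ℕ → ℝ → ℝ≥0∞ := fun n x =>
    ENNReal.ofReal (Real.exp (-((1 / ((n : ℝ) + 1)) * x ^ 2))) * (‖G x‖₊ : ℝ≥0∞) ^ 2 with hF
  have hFmeas : ∀ n, Measurable (F n) := by
    intro n
    apply Measurable.fun_mul
    · exact ENNReal.measurable_ofReal.comp (by fun_prop)
    · exact (hGmeas.measurable.nnnorm.coe_nnreal_ennreal).pow_const 2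
  have hmono : Monotone F := by
    intro m n hmn x
    simp only [hF]
    apply mul_le_mul_left
    apply ENNReal.ofReal_le_ofReal
    apply Real.exp_le_exp.2
    have hx : (0:ℝ) ≤ x ^ 2 := sq_nonneg x
    have hmn' : ((m:ℝ) + 1) ≤ ((n:ℝ) + 1) := by
      have : (m:ℝ) ≤ (n:ℝ) := Nat.cast_le.2 hmn
      linarith
    have h1 : (1 / ((n:ℝ) + 1)) ≤ 1 / ((m:ℝ) + 1) :=
      one_div_le_one_div_of_le (by positivity) hmn'
    nlinarith
  have hsup : ∀ x : ℝ, (⨆ n : ℕ, F n x) = (‖G x‖₊ : ℝ≥0∞) ^ 2 := by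
    intro x
    simp only [hF]
    rw [← ENNReal.iSup_mul]
    have hone : (⨆ n : ℕ, ENNReal.ofReal (Real.exp (-((1 / ((n : ℝ) + 1)) * x ^ 2)))) = 1 := by
      apply le_antisymm
      · apply iSup_le
        intro n
        rw [ENNReal.ofReal_le_one]
        rw [Real.exp_le_one_iff]
        have : (0:ℝ) ≤ (1 / ((n:ℝ) + 1)) * x ^ 2 := by positivity
        linarith
      · have h0 : Filter.Tendsto (fun n : ℕ => (1 / ((n : ℝ) + 1))) Filter.atTop (nhds 0) :=
          tendsto_one_div_add_atTop_nhds_zero_nat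
        have h1 : Filter.Tendsto (fun n : ℕ => -((1 / ((n : ℝ) + 1)) * x ^ 2)) Filter.atTop
            (nhds 0) := by
          have := (h0.mul_const (x ^ 2)).neg
          simpa using this
        have h2 : Filter.Tendsto
            (fun n : ℕ => ENNReal.ofReal (Real.exp (-((1 / ((n : ℝ) + 1)) * x ^ 2))))
            Filter.atTop (nhds 1) := by
          have h3 := (Real.continuous_exp.tendsto 0).comp h1
          have h4 := (ENNReal.continuous_ofReal.tendsto (Real.exp 0)).comp h3
          simpa [Function.comp_def] using h4
        exact le_of_tendsto' h2 fun n => le_iSup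
          (fun n : ℕ => ENNReal.ofReal (Real.exp (-((1 / ((n : ℝ) + 1)) * x ^ 2)))) n
    rw [hone, one_mul]
  calc ∫⁻ x : ℝ, (‖G x‖₊ : ℝ≥0∞) ^ 2 = ∫⁻ x : ℝ, ⨆ n : ℕ, F n x := by
        apply lintegral_congr
        intro x
        rw [hsup x]
    _ = ⨆ n : ℕ, ∫⁻ x : ℝ, F n x := lintegral_iSup hFmeas hmono
    _ ≤ ENNReal.ofReal (4 * Real.pi) * ∫⁻ ξ : ℝ, (‖h ξ‖₊ : ℝ≥0∞) ^ 2 := by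
        apply iSup_le
        intro n
        have := gauss_key hc hsupp (ε := 1 / ((n : ℝ) + 1)) (by positivity)
        simpa only [hF, hG] using this


/-- Lemma 4.2 (ii): ‖A^{−s} F_ρ‖_{L²_x L^∞_t} ≤ c ‖f‖_{L²} for ρ > 1/2 and s > 3ρ. -/
theorem L2x_Linftyt_estimate (l ρ s : ℝ) (hl0 : 0 < l) (hl1 : l < 1)
    (hρ : 1 / 2 < ρ) (hs : 3 * ρ < s) :
    ∃ c : ℝ, 0 < c ∧ ∀ f : ℝ × ℝ → ℂ, Continuous f → HasCompactSupport f →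
      (∫⁻ x : ℝ, (⨆ t : ℝ, (‖symbolFourierInt l ρ (-s) f x t‖₊ : ℝ≥0∞)) ^ 2)
          ^ ((1 : ℝ) / 2)
        ≤ ENNReal.ofReal c *
          (∫⁻ p : ℝ × ℝ, (‖f p‖₊ : ℝ≥0∞) ^ 2) ^ ((1 : ℝ) / 2) := by
  have hρ0 : 0 < ρ := by linarith
  set ρ' : ℝ := (ρ + 1 / 2) / 2 with hρ'def
  have hρ'0 : 0 ≤ ρ' := by rw [hρ'def]; linarith
  have hρ'ρ : ρ' ≤ ρ := by rw [hρ'def]; linarith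
  have hρ's : 3 * ρ' ≤ s := by rw [hρ'def]; linarith
  have h2ρ' : 1 < 2 * ρ' := by rw [hρ'def]; linarith
  set A : ℝ≥0∞ := ∫⁻ τ : ℝ, ENNReal.ofReal ((1 + |τ|) ^ (-(2 * ρ'))) with hA
  have hAfin : A < ⊤ := weight_finite h2ρ'
  set K : ℝ≥0∞ := A * ENNReal.ofReal (4 * Real.pi) with hK
  have hKfin : K ≠ ⊤ := by
    rw [hK]
    exact ENNReal.mul_ne_top hAfin.ne ENNReal.ofReal_ne_top
  refine ⟨K.toReal ^ ((1 : ℝ) / 2) + 1, by positivity, ?_⟩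
  intro f hfc hfs
  have hKle : K ^ ((1 : ℝ) / 2) ≤ ENNReal.ofReal (K.toReal ^ ((1 : ℝ) / 2) + 1) := by
    by_cases hK0 : K = 0
    · rw [hK0, ENNReal.zero_rpow_of_pos (by norm_num)]
      exact zero_le
    · have hpos : 0 < K.toReal := ENNReal.toReal_pos hK0 hKfin
      calc K ^ ((1 : ℝ) / 2) = (ENNReal.ofReal K.toReal) ^ ((1 : ℝ) / 2) := by
            rw [ENNReal.ofReal_toReal hKfin]
        _ = ENNReal.ofReal (K.toReal ^ ((1 : ℝ) / 2)) := ENNReal.ofReal_rpow_of_pos hpos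
        _ ≤ _ := ENNReal.ofReal_le_ofReal (by linarith)
  have key : (∫⁻ x : ℝ, (⨆ t : ℝ, (‖symbolFourierInt l ρ (-s) f x t‖₊ : ℝ≥0∞)) ^ 2)
      ≤ K * ∫⁻ p : ℝ × ℝ, (‖f p‖₊ : ℝ≥0∞) ^ 2 := by
    -- continuity of the weights
    have hwcont1 : Continuous fun ξ : ℝ => (1 + |ξ|) ^ (-s) := by
      apply Continuous.rpow_const (by fun_prop)
      intro x; left; positivity
    have hphase : Continuous (benjaminPhase l) := by
      unfold benjaminPhase; fun_prop
    have hwcont2 : Continuous fun p : ℝ × ℝ => (1 + |p.2 - benjaminPhase l p.1|) ^ (-ρ) := by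
      apply Continuous.rpow_const
        (continuous_const.add (continuous_snd.sub (hphase.comp continuous_fst)).abs)
      intro x; left; simp only [Pi.add_apply, Pi.sub_apply, Function.comp_apply]; positivity
    set g : ℝ × ℝ → ℂ := fun p => ((((1 + |p.1|) ^ (-s) : ℝ)) : ℂ) *
        ((((1 + |p.2 - benjaminPhase l p.1|) ^ (-ρ) : ℝ)) : ℂ) * f p with hg
    have hgcont : Continuous g := by
      rw [hg]
      exact ((Complex.continuous_ofReal.comp (hwcont1.comp continuous_fst)).mul
        (Complex.continuous_ofReal.comp hwcont2)).mul hfc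
    have hgsupp : HasCompactSupport g := hfs.mul_left
    have hgint : Integrable g := hgcont.integrable_of_hasCompactSupport hgsupp
    have hker : ∀ x t : ℝ, Integrable
        (fun p : ℝ × ℝ => Complex.exp (Complex.I * ((x * p.1 + t * p.2 : ℝ) : ℂ)) * g p) := by
      intro x t
      apply Continuous.integrable_of_hasCompactSupport
      · exact ((continuous_const.mul (Complex.continuous_ofReal.comp (by fun_prop))).cexp).mul
          hgcont
      · exact hgsupp.mul_left
    have hFeq : ∀ x t : ℝ, symbolFourierInt l ρ (-s) f x t
        = ∫ τ : ℝ, ∫ ξ : ℝ, Complex.exp (Complex.I * ((x * ξ + t * τ : ℝ) : ℂ)) * g (ξ, τ) := by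
      intro x t
      have h1 : symbolFourierInt l ρ (-s) f x t
          = ∫ p : ℝ × ℝ, Complex.exp (Complex.I * ((x * p.1 + t * p.2 : ℝ) : ℂ)) * g p := by
        unfold symbolFourierInt
        apply integral_congr_ae
        filter_upwards with p
        rw [hg]
        ring
      rw [h1, Measure.volume_eq_prod ℝ ℝ, integral_prod _ (hker x t)]
      exact integral_integral_swap (hker x t)
    set G : ℝ × ℝ → ℂ := fun q =>
      ∫ ξ : ℝ, Complex.exp (Complex.I * ((q.1 * ξ : ℝ) : ℂ)) * g (ξ, q.2) with hGdef
    have hGm : StronglyMeasurable G := by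
      rw [hGdef]
      apply param_meas (K := fun z : (ℝ × ℝ) × ℝ =>
        Complex.exp (Complex.I * ((z.1.1 * z.2 : ℝ) : ℂ)) * g (z.2, z.1.2))
      exact ((continuous_const.mul (Complex.continuous_ofReal.comp (by fun_prop))).cexp).mul
        (hgcont.comp (continuous_snd.prodMk (continuous_snd.comp continuous_fst)))
    -- Step 1 : pointwise bound for the sup over t
    have step1 : ∀ x : ℝ, (⨆ t : ℝ, (‖symbolFourierInt l ρ (-s) f x t‖₊ : ℝ≥0∞))
        ≤ ∫⁻ τ : ℝ, (‖G (x, τ)‖₊ : ℝ≥0∞) := by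
      intro x
      apply iSup_le
      intro t
      rw [hFeq x t]
      calc (‖∫ τ : ℝ, ∫ ξ : ℝ, Complex.exp (Complex.I * ((x * ξ + t * τ : ℝ) : ℂ)) * g (ξ, τ)‖₊ :
            ℝ≥0∞)
          ≤ ∫⁻ τ : ℝ, (‖∫ ξ : ℝ, Complex.exp (Complex.I * ((x * ξ + t * τ : ℝ) : ℂ)) *
              g (ξ, τ)‖₊ : ℝ≥0∞) := enorm_integral_le_lintegral_enorm _
        _ = ∫⁻ τ : ℝ, (‖G (x, τ)‖₊ : ℝ≥0∞) := by
            apply lintegral_congr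
            intro τ
            have h2 : (∫ ξ : ℝ, Complex.exp (Complex.I * ((x * ξ + t * τ : ℝ) : ℂ)) * g (ξ, τ))
                = Complex.exp (Complex.I * ((t * τ : ℝ) : ℂ)) * G (x, τ) := by
              rw [hGdef]
              dsimp only
              rw [← integral_const_mul]
              apply integral_congr_ae
              filter_upwards with ξ
              have hexp : Complex.exp (Complex.I * ((x * ξ + t * τ : ℝ) : ℂ))
                  = Complex.exp (Complex.I * ((t * τ : ℝ) : ℂ)) *
                    Complex.exp (Complex.I * ((x * ξ : ℝ) : ℂ)) := by
                rw [← Complex.exp_add]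
                congr 1
                push_cast
                ring
              rw [hexp]
              ring
            rw [h2, ← enorm_eq_nnnorm, ← ofReal_norm, ← enorm_eq_nnnorm, ← ofReal_norm]
            congr 1
            rw [norm_mul]
            have h3 : ‖Complex.exp (Complex.I * ((t * τ : ℝ) : ℂ))‖ = 1 := by
              rw [Complex.norm_exp]
              simp
            rw [h3, one_mul]
    have hGm2 : ∀ x : ℝ, Measurable fun τ : ℝ => (‖G (x, τ)‖₊ : ℝ≥0∞) := fun x =>
      ((hGm.measurable.comp (measurable_const.prodMk measurable_id)).nnnorm).coe_nnreal_ennreal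
    -- Step 2 : Cauchy-Schwarz in τ
    have step2 : ∀ x : ℝ, (∫⁻ τ : ℝ, (‖G (x, τ)‖₊ : ℝ≥0∞))
        ≤ A ^ ((1 : ℝ) / 2) *
          (∫⁻ τ : ℝ, ENNReal.ofReal ((1 + |τ|) ^ (2 * ρ')) * (‖G (x, τ)‖₊ : ℝ≥0∞) ^ 2)
            ^ ((1 : ℝ) / 2) := by
      intro x
      set u : ℝ → ℝ≥0∞ := fun τ => ENNReal.ofReal ((1 + |τ|) ^ (-ρ')) with hu
      set v : ℝ → ℝ≥0∞ := fun τ => ENNReal.ofReal ((1 + |τ|) ^ ρ') * (‖G (x, τ)‖₊ : ℝ≥0∞) with hv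
      have hum : Measurable u := by
        rw [hu]
        apply ENNReal.measurable_ofReal.comp
        apply Continuous.measurable
        apply Continuous.rpow_const (by fun_prop)
        intro y; left; positivity
      have hvm : Measurable v := by
        rw [hv]
        apply Measurable.fun_mul _ (hGm2 x)
        apply ENNReal.measurable_ofReal.comp
        apply Continuous.measurable
        apply Continuous.rpow_const (by fun_prop)
        intro y; left; positivity
      have hpos : ∀ τ : ℝ, (0:ℝ) < 1 + |τ| := fun τ => by positivity
      have huv : ∀ τ : ℝ, (u * v) τ = (‖G (x, τ)‖₊ : ℝ≥0∞) := by
        intro τ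
        show u τ * v τ = _
        rw [hu, hv]
        dsimp only
        rw [← mul_assoc, ← ENNReal.ofReal_mul (Real.rpow_nonneg (hpos τ).le _),
          ← Real.rpow_add (hpos τ), neg_add_cancel, Real.rpow_zero, ENNReal.ofReal_one, one_mul]
      have hHolder := ENNReal.lintegral_mul_le_Lp_mul_Lq volume
        Real.HolderConjugate.two_two hum.aemeasurable hvm.aemeasurable
      have hLHS : (∫⁻ τ : ℝ, (‖G (x, τ)‖₊ : ℝ≥0∞)) = ∫⁻ τ : ℝ, (u * v) τ := by
        apply lintegral_congr
        intro τ
        rw [huv τ]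
      have hu2 : (∫⁻ τ : ℝ, u τ ^ (2 : ℝ)) = A := by
        rw [hA]
        apply lintegral_congr
        intro τ
        rw [hu]
        dsimp only
        rw [ENNReal.ofReal_rpow_of_pos (Real.rpow_pos_of_pos (hpos τ) _),
          ← Real.rpow_mul (hpos τ).le, show (-ρ') * 2 = -(2 * ρ') from by ring]
      have hv2 : (∫⁻ τ : ℝ, v τ ^ (2 : ℝ))
          = ∫⁻ τ : ℝ, ENNReal.ofReal ((1 + |τ|) ^ (2 * ρ')) * (‖G (x, τ)‖₊ : ℝ≥0∞) ^ 2 := by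
        apply lintegral_congr
        intro τ
        rw [hv]
        dsimp only
        rw [ENNReal.mul_rpow_of_nonneg _ _ (by norm_num : (0:ℝ) ≤ 2)]
        congr 1
        · rw [ENNReal.ofReal_rpow_of_pos (Real.rpow_pos_of_pos (hpos τ) _),
            ← Real.rpow_mul (hpos τ).le, show ρ' * 2 = 2 * ρ' from by ring]
        · rw [show (2 : ℝ) = ((2 : ℕ) : ℝ) from by norm_num, ENNReal.rpow_natCast]
      rw [hLHS, ← hu2, ← hv2]
      exact hHolder
    -- Step 3 : square
    have step3 : ∀ x : ℝ, (⨆ t : ℝ, (‖symbolFourierInt l ρ (-s) f x t‖₊ : ℝ≥0∞)) ^ 2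
        ≤ A * ∫⁻ τ : ℝ, ENNReal.ofReal ((1 + |τ|) ^ (2 * ρ')) * (‖G (x, τ)‖₊ : ℝ≥0∞) ^ 2 := by
      intro x
      have h12 := (step1 x).trans (step2 x)
      set B : ℝ≥0∞ := ∫⁻ τ : ℝ, ENNReal.ofReal ((1 + |τ|) ^ (2 * ρ')) * (‖G (x, τ)‖₊ : ℝ≥0∞) ^ 2
        with hB
      calc (⨆ t : ℝ, (‖symbolFourierInt l ρ (-s) f x t‖₊ : ℝ≥0∞)) ^ 2
          = (⨆ t : ℝ, (‖symbolFourierInt l ρ (-s) f x t‖₊ : ℝ≥0∞)) *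
            (⨆ t : ℝ, (‖symbolFourierInt l ρ (-s) f x t‖₊ : ℝ≥0∞)) := sq _
        _ ≤ (A ^ ((1 : ℝ) / 2) * B ^ ((1 : ℝ) / 2)) * (A ^ ((1 : ℝ) / 2) * B ^ ((1 : ℝ) / 2)) :=
            mul_le_mul' h12 h12
        _ = (A ^ ((1 : ℝ) / 2) * A ^ ((1 : ℝ) / 2)) * (B ^ ((1 : ℝ) / 2) * B ^ ((1 : ℝ) / 2)) := by
            ring
        _ = A * B := by
            rw [← ENNReal.rpow_add_of_nonneg _ _ (by norm_num) (by norm_num),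
              ← ENNReal.rpow_add_of_nonneg _ _ (by norm_num) (by norm_num)]
            norm_num
    -- compact support of slices
    have hslice : ∀ τ : ℝ, HasCompactSupport fun ξ : ℝ => g (ξ, τ) := by
      intro τ
      apply HasCompactSupport.intro (hgsupp.image continuous_fst)
      intro ξ hξ
      by_contra hne
      exact hξ ⟨(ξ, τ), subset_tsupport g (Function.mem_support.2 hne), rfl⟩
    have hslicecont : ∀ τ : ℝ, Continuous fun ξ : ℝ => g (ξ, τ) := fun τ =>
      hgcont.comp (continuous_id.prodMk continuous_const)
    -- measurability on the product
    have hjoint : Measurable fun q : ℝ × ℝ =>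
        ENNReal.ofReal ((1 + |q.2|) ^ (2 * ρ')) * (‖G q‖₊ : ℝ≥0∞) ^ 2 := by
      apply Measurable.fun_mul
      · apply ENNReal.measurable_ofReal.comp
        apply Continuous.measurable
        apply Continuous.rpow_const (by fun_prop)
        intro y; left; positivity
      · exact (hGm.measurable.nnnorm.coe_nnreal_ennreal).pow_const 2
    have hfmeas : Measurable fun p : ℝ × ℝ => (‖f p‖₊ : ℝ≥0∞) ^ 2 :=
      (hfc.measurable.nnnorm.coe_nnreal_ennreal).pow_const 2
    -- assemble
    calc (∫⁻ x : ℝ, (⨆ t : ℝ, (‖symbolFourierInt l ρ (-s) f x t‖₊ : ℝ≥0∞)) ^ 2)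
        ≤ ∫⁻ x : ℝ, A * ∫⁻ τ : ℝ,
            ENNReal.ofReal ((1 + |τ|) ^ (2 * ρ')) * (‖G (x, τ)‖₊ : ℝ≥0∞) ^ 2 :=
          lintegral_mono fun x => step3 x
      _ = A * ∫⁻ x : ℝ, ∫⁻ τ : ℝ,
            ENNReal.ofReal ((1 + |τ|) ^ (2 * ρ')) * (‖G (x, τ)‖₊ : ℝ≥0∞) ^ 2 :=
          lintegral_const_mul' _ _ hAfin.ne
      _ = A * ∫⁻ τ : ℝ, ∫⁻ x : ℝ,
            ENNReal.ofReal ((1 + |τ|) ^ (2 * ρ')) * (‖G (x, τ)‖₊ : ℝ≥0∞) ^ 2 := by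
          congr 1
          exact lintegral_lintegral_swap hjoint.aemeasurable
      _ = A * ∫⁻ τ : ℝ, ENNReal.ofReal ((1 + |τ|) ^ (2 * ρ')) *
            ∫⁻ x : ℝ, (‖G (x, τ)‖₊ : ℝ≥0∞) ^ 2 := by
          congr 1
          apply lintegral_congr
          intro τ
          rw [lintegral_const_mul' _ _ ENNReal.ofReal_ne_top]
      _ ≤ A * ∫⁻ τ : ℝ, ENNReal.ofReal ((1 + |τ|) ^ (2 * ρ')) *
            (ENNReal.ofReal (4 * Real.pi) * ∫⁻ ξ : ℝ, (‖g (ξ, τ)‖₊ : ℝ≥0∞) ^ 2) := by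
          apply mul_le_mul_right
          apply lintegral_mono
          intro τ
          exact mul_le_mul_right (plancherel_ineq (hslicecont τ) (hslice τ)) _
      _ = K * ∫⁻ τ : ℝ, ∫⁻ ξ : ℝ,
            ENNReal.ofReal ((1 + |τ|) ^ (2 * ρ')) * (‖g (ξ, τ)‖₊ : ℝ≥0∞) ^ 2 := by
          have hmul : ∀ τ : ℝ, ENNReal.ofReal ((1 + |τ|) ^ (2 * ρ')) *
              (ENNReal.ofReal (4 * Real.pi) * ∫⁻ ξ : ℝ, (‖g (ξ, τ)‖₊ : ℝ≥0∞) ^ 2)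
              = ENNReal.ofReal (4 * Real.pi) *
                ∫⁻ ξ : ℝ, ENNReal.ofReal ((1 + |τ|) ^ (2 * ρ')) * (‖g (ξ, τ)‖₊ : ℝ≥0∞) ^ 2 := by
            intro τ
            rw [lintegral_const_mul' _ _ ENNReal.ofReal_ne_top]
            ring
          rw [lintegral_congr hmul, lintegral_const_mul' _ _ ENNReal.ofReal_ne_top, hK]
          ring
      _ ≤ K * ∫⁻ τ : ℝ, ∫⁻ ξ : ℝ, (‖f (ξ, τ)‖₊ : ℝ≥0∞) ^ 2 := by
          apply mul_le_mul_right
          apply lintegral_mono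
          intro τ
          apply lintegral_mono
          intro ξ
          have hpos1 : (0:ℝ) < 1 + |τ| := by positivity
          have hb := weight_bound hl0 hl1 hρ'0 hρ'ρ hρ's ξ τ
          have hgnorm : ‖g (ξ, τ)‖
              = (1 + |ξ|) ^ (-s) * (1 + |τ - benjaminPhase l ξ|) ^ (-ρ) * ‖f (ξ, τ)‖ := by
            rw [hg]
            dsimp only
            rw [norm_mul, norm_mul, Complex.norm_real, Complex.norm_real, Real.norm_eq_abs,
              Real.norm_eq_abs, _root_.abs_of_nonneg (Real.rpow_nonneg (by positivity) _),
              _root_.abs_of_nonneg (Real.rpow_nonneg (by positivity) _)]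
          have hlin : ENNReal.ofReal ((1 + |τ|) ^ ρ') * (‖g (ξ, τ)‖₊ : ℝ≥0∞)
              ≤ (‖f (ξ, τ)‖₊ : ℝ≥0∞) := by
            rw [← enorm_eq_nnnorm, ← ofReal_norm, ← enorm_eq_nnnorm, ← ofReal_norm,
              ← ENNReal.ofReal_mul (Real.rpow_nonneg hpos1.le _)]
            apply ENNReal.ofReal_le_ofReal
            rw [hgnorm]
            calc (1 + |τ|) ^ ρ' *
                  ((1 + |ξ|) ^ (-s) * (1 + |τ - benjaminPhase l ξ|) ^ (-ρ) * ‖f (ξ, τ)‖)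
                = ((1 + |τ|) ^ ρ' *
                    ((1 + |ξ|) ^ (-s) * (1 + |τ - benjaminPhase l ξ|) ^ (-ρ))) * ‖f (ξ, τ)‖ := by
                  ring
              _ ≤ 1 * ‖f (ξ, τ)‖ := mul_le_mul_of_nonneg_right hb (norm_nonneg _)
              _ = ‖f (ξ, τ)‖ := one_mul _
          calc ENNReal.ofReal ((1 + |τ|) ^ (2 * ρ')) * (‖g (ξ, τ)‖₊ : ℝ≥0∞) ^ 2
              = (ENNReal.ofReal ((1 + |τ|) ^ ρ') * (‖g (ξ, τ)‖₊ : ℝ≥0∞)) *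
                (ENNReal.ofReal ((1 + |τ|) ^ ρ') * (‖g (ξ, τ)‖₊ : ℝ≥0∞)) := by
                rw [show (2 * ρ') = ρ' + ρ' from by ring, Real.rpow_add hpos1,
                  ENNReal.ofReal_mul (Real.rpow_nonneg hpos1.le _), sq]
                ring
            _ ≤ (‖f (ξ, τ)‖₊ : ℝ≥0∞) * (‖f (ξ, τ)‖₊ : ℝ≥0∞) := mul_le_mul' hlin hlin
            _ = (‖f (ξ, τ)‖₊ : ℝ≥0∞) ^ 2 := (sq _).symm
      _ = K * ∫⁻ p : ℝ × ℝ, (‖f p‖₊ : ℝ≥0∞) ^ 2 := by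
          congr 1
          rw [Measure.volume_eq_prod ℝ ℝ, lintegral_prod_symm _ hfmeas.aemeasurable]
  calc (∫⁻ x : ℝ, (⨆ t : ℝ, (‖symbolFourierInt l ρ (-s) f x t‖₊ : ℝ≥0∞)) ^ 2) ^ ((1 : ℝ) / 2)
      ≤ (K * ∫⁻ p : ℝ × ℝ, (‖f p‖₊ : ℝ≥0∞) ^ 2) ^ ((1 : ℝ) / 2) :=
        ENNReal.rpow_le_rpow key (by norm_num)
    _ = K ^ ((1 : ℝ) / 2) * (∫⁻ p : ℝ × ℝ, (‖f p‖₊ : ℝ≥0∞) ^ 2) ^ ((1 : ℝ) / 2) :=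
        ENNReal.mul_rpow_of_nonneg _ _ (by norm_num)
    _ ≤ ENNReal.ofReal (K.toReal ^ ((1 : ℝ) / 2) + 1) *
          (∫⁻ p : ℝ × ℝ, (‖f p‖₊ : ℝ≥0∞) ^ 2) ^ ((1 : ℝ) / 2) :=
        mul_le_mul_left hKle _
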